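/- Let L ≥ 1, and for l = 1, …, L let a_l ≠ 0 and λ_l > 0 with λ_l ≥ |a_l|/2. Then the function g(x) = Σ_{l=1}^{L} e^{−2λ_l x}·(1 + a_l²x²) is strictly decreasing on the interval [0, ∞). -/

import Mathlib

open Set

/-- the function `g(x) = Σₗ e^{−2λₗx}(1 + aₗ²x²)` is strictly decreasing on
`[0, ∞)` provided `aₗ ≠ 0`, `λₗ > 0` and `λₗ ≥ |aₗ|/2` for all `l`. -/
theorem sum_exp_poly_strictAntiOn
    (L : ℕ) (hL : 1 ≤ L) (a lam : Fin L → ℝ)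
    (ha : ∀ l, a l ≠ 0) (hpos : ∀ l, 0 < lam l) (hcond : ∀ l, |a l| / 2 ≤ lam l) :
    StrictAntiOn
      (fun x : ℝ => ∑ l, Real.exp (-2 * lam l * x) * (1 + (a l) ^ 2 * x ^ 2))
      (Set.Ici 0) := by
  set g : ℝ → ℝ := fun x => ∑ l, Real.exp (-2 * lam l * x) * (1 + (a l) ^ 2 * x ^ 2) with hg
  set g' : ℝ → ℝ := fun x => ∑ l, Real.exp (-2 * lam l * x) *
      (2 * (a l) ^ 2 * x - 2 * lam l * (1 + (a l) ^ 2 * x ^ 2)) with hg'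
  have hterm : ∀ (l : Fin L) (x : ℝ),
      HasDerivAt (fun x => Real.exp (-2 * lam l * x) * (1 + (a l) ^ 2 * x ^ 2))
        (Real.exp (-2 * lam l * x) *
          (2 * (a l) ^ 2 * x - 2 * lam l * (1 + (a l) ^ 2 * x ^ 2))) x := by
    intro l x
    have h1 : HasDerivAt (fun x : ℝ => -2 * lam l * x) (-2 * lam l) x := by
      simpa using (hasDerivAt_id x).const_mul (-2 * lam l)
    have h2 := h1.exp
    have h3 : HasDerivAt (fun x : ℝ => 1 + (a l) ^ 2 * x ^ 2) ((a l) ^ 2 * (2 * x)) x := by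
      have := ((hasDerivAt_pow 2 x).const_mul ((a l) ^ 2)).const_add 1
      simpa using this
    have := h2.fun_mul h3
    refine this.congr_deriv ?_
    ring
  have hD : ∀ x : ℝ, HasDerivAt g (g' x) x := fun x =>
    HasDerivAt.fun_sum (fun l _ => hterm l x)
  have hderiv : ∀ x : ℝ, deriv g x = g' x := fun x => (hD x).deriv
  -- each summand of g' is ≤ 0 for x ≥ 0
  have hle : ∀ (l : Fin L) (x : ℝ), 0 ≤ x →
      Real.exp (-2 * lam l * x) * (2 * (a l) ^ 2 * x - 2 * lam l * (1 + (a l) ^ 2 * x ^ 2)) ≤ 0 := by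
    intro l x hx
    apply mul_nonpos_of_nonneg_of_nonpos (Real.exp_pos _).le
    have h := hcond l
    rw [← sq_abs (a l)]
    nlinarith [mul_nonneg (abs_nonneg (a l)) (sq_nonneg (|a l| * x - 1)),
      mul_nonneg (by linarith : (0:ℝ) ≤ lam l - |a l| / 2)
        (by positivity : (0:ℝ) ≤ 1 + |a l| ^ 2 * x ^ 2)]
  have hlt : ∀ (l : Fin L) (x : ℝ), 0 ≤ x → |a l| * x ≠ 1 →
      Real.exp (-2 * lam l * x) * (2 * (a l) ^ 2 * x - 2 * lam l * (1 + (a l) ^ 2 * x ^ 2)) < 0 := by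
    intro l x hx hne
    apply mul_neg_of_pos_of_neg (Real.exp_pos _)
    have h := hcond l
    rw [← sq_abs (a l)]
    have habs : 0 < |a l| := abs_pos.mpr (ha l)
    have hsq : 0 < (|a l| * x - 1) ^ 2 := by
      have : |a l| * x - 1 ≠ 0 := sub_ne_zero.mpr hne
      positivity
    nlinarith [mul_pos habs hsq,
      mul_nonneg (by linarith : (0:ℝ) ≤ lam l - |a l| / 2)
        (by positivity : (0:ℝ) ≤ 1 + |a l| ^ 2 * x ^ 2)]
  -- g' < 0 away from the bad points
  have l0 : Fin L := ⟨0, hL⟩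
  have hneg : ∀ x : ℝ, 0 ≤ x → (∀ l : Fin L, x ≠ 1 / |a l|) → g' x < 0 := by
    intro x hx hB
    have : g' x < ∑ _l : Fin L, (0 : ℝ) := by
      apply Finset.sum_lt_sum (fun l _ => hle l x hx)
      refine ⟨l0, Finset.mem_univ _, ?_⟩
      apply hlt l0 x hx
      intro h1
      apply hB l0
      have habs : 0 < |a l0| := abs_pos.mpr (ha l0)
      field_simp
      linarith [h1]
    simpa using this
  have hcont : Continuous g := by
    apply continuous_finset_sum
    intro l _
    exact (Real.continuous_exp.comp (continuous_const.mul continuous_id)).mul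
      (continuous_const.add (continuous_const.mul (continuous_pow 2)))
  have hdiff : Differentiable ℝ g := fun x => (hD x).differentiableAt
  -- antitone on [0, ∞)
  have hanti : AntitoneOn g (Ici 0) := by
    apply antitoneOn_of_deriv_nonpos (convex_Ici 0) hcont.continuousOn
      (fun x _ => (hdiff x).differentiableWithinAt)
    intro x hx
    rw [interior_Ici] at hx
    rw [hderiv]
    calc g' x ≤ ∑ _l : Fin L, (0 : ℝ) :=
          Finset.sum_le_sum (fun l _ => hle l x (le_of_lt hx))
      _ = 0 := by simp
  -- strict decrease on an interval [u,v] ⊆ [0,∞) whose interior avoids bad points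
  have hstrict : ∀ u v : ℝ, 0 ≤ u →
      (∀ z ∈ Ioo u v, ∀ l : Fin L, z ≠ 1 / |a l|) → StrictAntiOn g (Icc u v) := by
    intro u v hu hfree
    apply strictAntiOn_of_deriv_neg (convex_Icc u v) hcont.continuousOn
    intro x hx
    rw [interior_Icc] at hx
    rw [hderiv]
    exact hneg x (le_trans hu hx.1.le) (hfree x hx)
  intro x hx y hy hxy
  simp only [mem_Ici] at hx hy
  -- bad points inside (x, y)
  classical
  set S : Finset ℝ := (Finset.univ.image (fun l : Fin L => 1 / |a l|)).filter
      (fun z => x < z ∧ z < y) with hS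
  by_cases hSe : S.Nonempty
  · set b := S.min' hSe with hb
    have hbS : b ∈ S := S.min'_mem hSe
    have hbI : x < b ∧ b < y := by
      have := (Finset.mem_filter.mp hbS).2
      simpa using this
    have hfree : ∀ z ∈ Ioo x b, ∀ l : Fin L, z ≠ 1 / |a l| := by
      intro z hz l hzl
      have hzS : z ∈ S := by
        refine Finset.mem_filter.mpr ⟨?_, hz.1, lt_trans hz.2 hbI.2⟩
        exact Finset.mem_image.mpr ⟨l, Finset.mem_univ _, hzl.symm⟩
      exact absurd (S.min'_le z hzS) (not_le.mpr hz.2)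
    have h1 : g b < g x := hstrict x b hx hfree (left_mem_Icc.mpr hbI.1.le)
      (right_mem_Icc.mpr hbI.1.le) hbI.1
    have h2 : g y ≤ g b := hanti (le_trans hx hbI.1.le) (le_trans hy (le_refl y) : y ∈ Ici 0) hbI.2.le
    linarith
  · have hfree : ∀ z ∈ Ioo x y, ∀ l : Fin L, z ≠ 1 / |a l| := by
      intro z hz l hzl
      apply hSe
      refine ⟨z, Finset.mem_filter.mpr ⟨?_, hz.1, hz.2⟩⟩
      exact Finset.mem_image.mpr ⟨l, Finset.mem_univ _, hzl.symm⟩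
    exact hstrict x y hx hfree (left_mem_Icc.mpr hxy.le) (right_mem_Icc.mpr hxy.le) hxy
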